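/- Let α ∈ ℝ and let λ ∈ ℂ satisfy λ ≠ (α + 2πm)² for every m ∈ ℤ. Then c(λ) ≠ cos(α), the doubly infinite series Σ_{m∈ℤ} 1/((α + 2πm)² − λ) converges absolutely, and Σ_{m∈ℤ} 1/((α + 2πm)² − λ) = (s(λ)/2) · 1/(c(λ) − cos α). -/

import Mathlib

open Complex Real

/-- `c(λ) = cos ω` where `ω` is a complex square root of `λ`
(independent of the choice of square root). -/
noncomputable def cf (z : ℂ) : ℂ := Complex.cos (z ^ ((1 : ℂ) / 2))

/-- `s(λ) = sin(ω)/ω` where `ω` is a complex square root of `λ`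
(independent of the choice of square root), with `s(0) = 1`. -/
noncomputable def sf (z : ℂ) : ℂ :=
  if z = 0 then 1 else Complex.sin (z ^ ((1 : ℂ) / 2)) / z ^ ((1 : ℂ) / 2)

lemma aux_sq_root (lam : ℂ) : (lam ^ ((1:ℂ)/2)) ^ 2 = lam := by
  rcases eq_or_ne lam 0 with h | h
  · simp [h, Complex.zero_cpow (by norm_num : (1:ℂ)/2 ≠ 0)]
  · rw [Complex.cpow_def_of_ne_zero h, sq, ← Complex.exp_add,
      show Complex.log lam * (1/2) + Complex.log lam * (1/2) = Complex.log lam by ring,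
      Complex.exp_log h]

lemma aux_summable (α : ℝ) (lam : ℂ) :
    Summable (fun m : ℤ => ‖1 / ((((α + 2 * Real.pi * m : ℝ) : ℂ)) ^ 2 - lam)‖) := by
  have hg : Summable (fun m : ℤ => 1 / (m:ℝ)^2) :=
    Real.summable_one_div_int_pow.mpr one_lt_two
  refine Summable.of_norm_bounded_eventually hg ?_
  rw [Filter.eventually_cofinite]
  set N : ℕ := ⌈|α| + ‖lam‖⌉₊ + 1 with hN
  apply Set.Finite.subset (Set.finite_Icc (-(N:ℤ)) (N:ℤ))
  intro m hm
  by_contra hmem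
  apply hm
  have hNm : (N:ℝ) ≤ |(m:ℝ)| := by
    rcases not_and_or.mp (fun hc => hmem ⟨hc.1, hc.2⟩) with h1 | h1
    · push_neg at h1
      have h2 : (m:ℝ) < -(N:ℝ) := by exact_mod_cast h1
      rw [abs_of_neg (by linarith [Nat.cast_nonneg (α := ℝ) N] : (m:ℝ) < 0)]
      linarith
    · push_neg at h1
      have h2 : (N:ℝ) < (m:ℝ) := by exact_mod_cast h1
      rw [abs_of_pos (by linarith [Nat.cast_nonneg (α := ℝ) N] : (0:ℝ) < m)]
      linarith
  have hNge : |α| + ‖lam‖ + 1 ≤ (N:ℝ) := by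
    rw [hN]; push_cast
    have := Nat.le_ceil (|α| + ‖lam‖)
    linarith
  have habs : (0:ℝ) ≤ ‖lam‖ := norm_nonneg _
  have hαabs : (0:ℝ) ≤ |α| := abs_nonneg _
  set b : ℝ := α + 2 * Real.pi * m with hb
  have hm1 : (1:ℝ) ≤ |(m:ℝ)| := by
    have : (1:ℝ) ≤ (N:ℝ) := by exact_mod_cast Nat.one_le_iff_ne_zero.mpr (by omega)
    linarith
  have hpi : (3:ℝ) ≤ Real.pi := Real.pi_gt_three.le
  have hbge : 5 * |(m:ℝ)| ≤ |b| := by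
    have h3 := abs_sub_abs_le_abs_sub (2 * Real.pi * (m:ℝ)) (-α)
    have h4 : |2 * Real.pi * (m:ℝ)| = 2 * Real.pi * |(m:ℝ)| := by
      rw [abs_mul, abs_of_pos (by positivity : (0:ℝ) < 2 * Real.pi)]
    rw [h4, abs_neg] at h3
    have h5 : |2 * Real.pi * (m:ℝ) - -α| = |b| := by rw [hb]; ring_nf
    rw [h5] at h3
    have hα : |α| ≤ |(m:ℝ)| := by linarith
    nlinarith
  have hb2 : (m:ℝ)^2 ≤ b^2 - ‖lam‖ := by
    have h25 : 25 * (m:ℝ)^2 ≤ b^2 := by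
      nlinarith [abs_nonneg b, _root_.sq_abs b, _root_.sq_abs (m:ℝ)]
    have hlm : ‖lam‖ ≤ (m:ℝ)^2 := by nlinarith [_root_.sq_abs (m:ℝ)]
    nlinarith
  have hden : (m:ℝ)^2 ≤ ‖((b:ℝ):ℂ)^2 - lam‖ := by
    have h6 := norm_sub_norm_le (((b:ℝ):ℂ)^2) lam
    have h7 : ‖((b:ℝ):ℂ)^2‖ = b^2 := by
      rw [norm_pow, Complex.norm_real, Real.norm_eq_abs, _root_.sq_abs]
    rw [h7] at h6
    linarith
  have hm2 : (0:ℝ) < (m:ℝ)^2 := by nlinarith [_root_.sq_abs (m:ℝ)]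
  rw [norm_norm, norm_div, norm_one]
  rw [div_le_div_iff₀ (by linarith) hm2]
  nlinarith

lemma aux_key_integral (α : ℝ) (lam : ℂ)
    (h : ∀ m : ℤ, lam ≠ (((α + 2 * Real.pi * m : ℝ) : ℂ)) ^ 2)
    (c s P Q u : ℂ)
    (hu : u = Complex.exp (-((α:ℂ) * I)))
    (Cc Ss g gd f : ℝ → ℂ)
    (hCc : Cc = fun t : ℝ => Complex.cos ((lam ^ ((1:ℂ)/2)) * t))
    (hCd : ∀ t : ℝ, HasDerivAt Cc (-lam * Ss t) t)
    (hSd : ∀ t : ℝ, HasDerivAt Ss (Cc t) t)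
    (hSscont : Continuous Ss)
    (hCc0 : Cc 0 = 1) (hSs0 : Ss 0 = 0) (hCc1 : Cc 1 = c) (hSs1 : Ss 1 = s)
    (hg : g = fun t => P * Cc t + Q * Ss t)
    (hgd : gd = fun t => P * (-lam * Ss t) + Q * Cc t)
    (hf : f = fun t : ℝ => Complex.exp (-((α:ℂ) * I) * t) * g t)
    (hE1 : u * (P * c + Q * s) = P)
    (hE2 : u * (-lam * P * s + Q * c) - Q = 1)
    (m : ℤ) :
    ∫ t in (0:ℝ)..1, (Complex.exp (2 * Real.pi * I * (-m) * t) * f t)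
      = 1 / ((((α + 2 * Real.pi * m : ℝ) : ℂ)) ^ 2 - lam) := by
  have hlin : ∀ (a : ℂ) (t : ℝ), HasDerivAt (fun x : ℝ => a * (x:ℂ)) a t := by
    intro a t
    simpa using (Complex.ofRealCLM.hasDerivAt (x := t)).const_mul a
  have hCccont : Continuous Cc := by
    rw [hCc]; exact Complex.continuous_cos.comp (by fun_prop)
  have hgcont : Continuous g := by
    rw [hg]; fun_prop
  set b : ℝ := α + 2 * Real.pi * m with hb
  have hbne : ((b:ℂ))^2 - lam ≠ 0 := sub_ne_zero.mpr (Ne.symm (h m))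
  set E : ℝ → ℂ := fun t => Complex.exp (-(b:ℂ) * I * t) with hE
  have hEder : ∀ t : ℝ, HasDerivAt E (-(b:ℂ) * I * E t) t := by
    intro t
    have h1 := ((hlin (-(b:ℂ) * I) t).cexp)
    simpa [hE, mul_comm] using h1
  have hint : ∀ t : ℝ, Complex.exp (2 * Real.pi * I * (-m) * t) * f t = g t * E t := by
    intro t
    rw [hf, hE]
    have harg : 2 * (Real.pi:ℂ) * I * (-(m:ℂ)) * (t:ℂ) + -((α:ℂ) * I) * t
        = -(b:ℂ) * I * t := by
      rw [hb]; push_cast; ring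
    rw [← mul_assoc, ← Complex.exp_add]
    push_cast
    rw [harg]
    ring
  have hgder : ∀ t, HasDerivAt g (gd t) t := by
    intro t
    have := ((hCd t).const_mul P).add ((hSd t).const_mul Q)
    rw [hg, hgd]; exact this
  have hgdder : ∀ t, HasDerivAt gd (-lam * g t) t := by
    intro t
    have h1 := (((hSd t).const_mul (-lam)).const_mul P).add ((hCd t).const_mul Q)
    rw [hg, hgd]
    exact h1.congr_deriv (by ring)
  set H : ℝ → ℂ := fun t => (gd t + I * b * g t) * E t / ((b:ℂ)^2 - lam) with hH
  have hHder : ∀ t : ℝ, HasDerivAt H (g t * E t) t := by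
    intro t
    have h1 : HasDerivAt (fun t => gd t + I * (b:ℂ) * g t)
        (-lam * g t + I * (b:ℂ) * gd t) t := (hgdder t).add ((hgder t).const_mul (I * (b:ℂ)))
    have h2 := (h1.mul (hEder t)).div_const ((b:ℂ)^2 - lam)
    rw [hH]
    refine h2.congr_deriv ?_
    symm
    rw [eq_div_iff hbne]
    have hI : (I:ℂ)^2 = -1 := Complex.I_sq
    linear_combination (g t * E t * (b:ℂ)^2) * hI
  have hInt : IntervalIntegrable (fun t => g t * E t) MeasureTheory.volume 0 1 :=
    (hgcont.mul (by fun_prop)).intervalIntegrable 0 1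
  have hFTC := intervalIntegral.integral_eq_sub_of_hasDerivAt
    (fun t _ => hHder t) hInt
  calc ∫ t in (0:ℝ)..1, Complex.exp (2 * Real.pi * I * (-m) * t) * f t
      = ∫ t in (0:ℝ)..1, g t * E t := by
        apply intervalIntegral.integral_congr
        intro t _
        exact hint t
    _ = H 1 - H 0 := hFTC
    _ = 1 / ((b:ℂ)^2 - lam) := by
        have hE1' : E 1 = u := by
          rw [hE]
          have harg2 : -((b:ℝ):ℂ) * I * ((1:ℝ):ℂ)
              = -((α:ℂ) * I) + ((-m : ℤ):ℂ) * (2 * (Real.pi:ℂ) * I) := by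
            rw [hb]; push_cast; ring
          show Complex.exp (-((b:ℝ):ℂ) * I * ((1:ℝ):ℂ)) = u
          rw [harg2, Complex.exp_add, Complex.exp_int_mul_two_pi_mul_I, mul_one, hu]
        have hE0' : E 0 = 1 := by simp [hE]
        rw [hH]
        simp only [hE1', hE0', mul_one]
        have hg1 : g 1 = P * c + Q * s := by rw [hg]; simp [hCc1, hSs1]
        have hg0 : g 0 = P := by rw [hg]; simp [hCc0, hSs0]
        have hgd1 : gd 1 = P * (-lam * s) + Q * c := by rw [hgd]; simp [hCc1, hSs1]
        have hgd0 : gd 0 = Q := by rw [hgd]; simp [hCc0, hSs0]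
        rw [hg1, hg0, hgd1, hgd0, div_sub_div_same]
        congr 1
        linear_combination hE2 + (I * (b:ℂ)) * hE1

lemma aux_coeff (f : ℝ → ℂ) (m : ℤ) :
    haveI : Fact ((0:ℝ) < 1) := ⟨one_pos⟩
    fourierCoeff (AddCircle.liftIco 1 0 f) m
      = ∫ t in (0:ℝ)..1, (Complex.exp (2 * Real.pi * I * (-m) * t) * f t) := by
  haveI : Fact ((0:ℝ) < 1) := ⟨one_pos⟩
  rw [fourierCoeff_liftIco_eq, fourierCoeffOn_eq_integral]
  norm_num
  apply intervalIntegral.integral_congr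
  intro t _
  simp only [fourier_coe_apply, smul_eq_mul]
  norm_num
  left
  rw [← Complex.exp_conj]
  congr 1
  simp only [map_mul, Complex.conj_I, Complex.conj_ofReal, map_intCast, map_ofNat]
  ring
theorem stmt_2 (α : ℝ) (lam : ℂ)
    (h : ∀ m : ℤ, lam ≠ (((α + 2 * Real.pi * m : ℝ) : ℂ)) ^ 2) :
    cf lam ≠ Complex.cos (α : ℂ) ∧
    Summable (fun m : ℤ => ‖1 / ((((α + 2 * Real.pi * m : ℝ) : ℂ)) ^ 2 - lam)‖) ∧
    ∑' m : ℤ, 1 / ((((α + 2 * Real.pi * m : ℝ) : ℂ)) ^ 2 - lam)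
      = sf lam / 2 * (1 / (cf lam - Complex.cos (α : ℂ))) := by
  haveI : Fact ((0:ℝ) < 1) := ⟨one_pos⟩
  set ω : ℂ := lam ^ ((1:ℂ)/2) with hωdef
  have hω2 : ω ^ 2 = lam := aux_sq_root lam
  set c : ℂ := Complex.cos ω with hcdef
  have hcf : cf lam = c := rfl
  set s : ℂ := sf lam with hsdef
  have hω0 : lam = 0 → ω = 0 := fun h0 => by
    rw [hωdef, h0, Complex.zero_cpow (by norm_num : (1:ℂ)/2 ≠ 0)]
  have hωne : lam ≠ 0 → ω ≠ 0 := fun h0 hh => h0 (by rw [← hω2, hh]; ring)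
  have hsin : Complex.sin ω = ω * s := by
    by_cases h0 : lam = 0
    · rw [hω0 h0, hsdef, sf, if_pos h0]; simp
    · rw [hsdef, sf, if_neg h0, ← hωdef]
      field_simp [hωne h0]
  have hcs : c ^ 2 + lam * s ^ 2 = 1 := by
    have h1 : Complex.sin ω ^ 2 = lam * s ^ 2 := by rw [hsin, ← hω2]; ring
    linear_combination Complex.sin_sq_add_cos_sq ω - h1
  have hcne : c ≠ Complex.cos (α:ℂ) := by
    intro hceq
    rw [hcdef] at hceq
    rcases Complex.cos_eq_cos_iff.mp hceq with ⟨k, hk | hk⟩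
    · refine h (-k) ?_
      rw [← hω2]
      push_cast
      linear_combination (-(ω + (α:ℂ) - 2*(Real.pi:ℂ)*(k:ℂ))) * hk
    · refine h (-k) ?_
      rw [← hω2]
      push_cast
      linear_combination (ω - (α:ℂ) + 2*(Real.pi:ℂ)*(k:ℂ)) * hk
  have hcos_ne : c - Complex.cos (α:ℂ) ≠ 0 := sub_ne_zero.mpr hcne
  set u : ℂ := Complex.exp (-((α:ℂ) * I)) with hu_def
  have hune : u ≠ 0 := Complex.exp_ne_zero _
  have hu2 : u ^ 2 + 1 = 2 * u * Complex.cos (α:ℂ) := by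
    rw [Complex.cos, hu_def]
    have h1 : Complex.exp (-((α:ℂ)*I)) * Complex.exp ((α:ℂ)*I) = 1 := by
      rw [← Complex.exp_add]; simp
    field_simp
    linear_combination (-1) * h1
  set D : ℂ := u^2 - 2*u*c + 1 with hD_def
  have hDalt : D = 2*u*(Complex.cos (α:ℂ) - c) := by rw [hD_def]; linear_combination hu2
  have hD : D ≠ 0 := by
    rw [hDalt]
    exact mul_ne_zero (mul_ne_zero two_ne_zero hune) (sub_ne_zero.mpr (Ne.symm hcne))
  set P : ℂ := s / (2 * (c - Complex.cos (α:ℂ))) with hP_def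
  set Q : ℂ := (u * c - 1) / D with hQ_def
  have hP' : P = -u * s / D := by
    rw [hP_def, hDalt]
    rw [div_eq_div_iff (mul_ne_zero two_ne_zero hcos_ne)
      (mul_ne_zero (mul_ne_zero two_ne_zero hune) (sub_ne_zero.mpr (Ne.symm hcne)))]
    ring
  have hE1 : u * (P * c + Q * s) = P := by
    rw [hP', hQ_def]
    field_simp
    ring
  have hE2 : u * (-lam * P * s + Q * c) - Q = 1 := by
    rw [hP', hQ_def]
    field_simp
    linear_combination (u^2) * hcs
  set Cc : ℝ → ℂ := fun t => Complex.cos (ω * t) with hCc_def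
  set Ss : ℝ → ℂ := fun t => if lam = 0 then (t:ℂ) else Complex.sin (ω * t) / ω with hSs_def
  have hlin : ∀ (a : ℂ) (t : ℝ), HasDerivAt (fun x : ℝ => a * (x:ℂ)) a t := by
    intro a t
    simpa using (Complex.ofRealCLM.hasDerivAt (x := t)).const_mul a
  have hCd : ∀ t : ℝ, HasDerivAt Cc (-lam * Ss t) t := by
    intro t
    have h1 : HasDerivAt (fun x : ℝ => Complex.cos (ω * x)) (-Complex.sin (ω * t) * ω) t := by
      have h2 := HasDerivAt.scomp t (Complex.hasDerivAt_cos (ω * (t:ℂ))) (hlin ω t)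
      exact h2.congr_deriv (by simp only [smul_eq_mul]; ring)
    by_cases h0 : lam = 0
    · have hw0 := hω0 h0
      have h2 : -lam * Ss t = 0 := by rw [h0]; ring
      rw [hCc_def, h2]
      simpa [hw0] using h1
    · have hwne := hωne h0
      have heq : -Complex.sin (ω * t) * ω = -lam * Ss t := by
        rw [hSs_def]; simp only [if_neg h0]
        rw [← hω2]; field_simp
      rw [hCc_def, ← heq]
      exact h1
  have hSd : ∀ t : ℝ, HasDerivAt Ss (Cc t) t := by
    intro t
    by_cases h0 : lam = 0
    · have hw0 := hω0 h0
      have hCct : Cc t = 1 := by rw [hCc_def]; simp [hw0]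
      rw [hCct, hSs_def]
      simp only [if_pos h0]
      simpa using hlin 1 t
    · have hwne := hωne h0
      have h1 : HasDerivAt (fun x : ℝ => Complex.sin (ω * x)) (Complex.cos (ω * t) * ω) t := by
        have h2 := HasDerivAt.scomp t (Complex.hasDerivAt_sin (ω * (t:ℂ))) (hlin ω t)
        exact h2.congr_deriv (by simp only [smul_eq_mul]; ring)
      have h3 := h1.div_const ω
      rw [hSs_def]; simp only [if_neg h0]
      refine h3.congr_deriv ?_
      symm
      rw [hCc_def]
      field_simp
  have hCc0 : Cc 0 = 1 := by rw [hCc_def]; simp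
  have hSs0 : Ss 0 = 0 := by rw [hSs_def]; split_ifs <;> simp
  have hCc1 : Cc 1 = c := by rw [hCc_def, hcdef]; simp
  have hSs1 : Ss 1 = s := by
    rw [hSs_def, hsdef, sf]
    split_ifs with h0
    · simp
    · rw [← hωdef]; simp
  have hCccont : Continuous Cc := by
    rw [hCc_def]; exact Complex.continuous_cos.comp (by fun_prop)
  have hSscont : Continuous Ss := by
    rw [hSs_def]
    split_ifs with h0
    · fun_prop
    · exact (Complex.continuous_sin.comp (by fun_prop)).div_const ω
  set g : ℝ → ℂ := fun t => P * Cc t + Q * Ss t with hg_def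
  set gd : ℝ → ℂ := fun t => P * (-lam * Ss t) + Q * Cc t with hgd_def
  set f : ℝ → ℂ := fun t => Complex.exp (-((α:ℂ) * I) * t) * g t with hf_def
  have hgcont : Continuous g := by
    rw [hg_def]; exact (continuous_const.mul hCccont).add (continuous_const.mul hSscont)
  have hfcont : Continuous f := by
    rw [hf_def]
    exact (Complex.continuous_exp.comp (by fun_prop)).mul hgcont
  have hf0 : f 0 = P := by
    rw [hf_def]
    simp only [hg_def]
    rw [hCc0, hSs0]
    simp
  have hf1 : f 1 = P := by
    have h1 : f 1 = u * (P * c + Q * s) := by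
      rw [hf_def]
      simp only [hg_def]
      rw [hCc1, hSs1, hu_def]
      norm_num
    rw [h1, hE1]
  set F : C(AddCircle (1:ℝ), ℂ) :=
    ⟨AddCircle.liftIco 1 0 f,
      AddCircle.liftIco_zero_continuous (by rw [hf0, hf1]) hfcont.continuousOn⟩ with hF_def
  have hFcoeff : ∀ m : ℤ, fourierCoeff (⇑F) m
      = 1 / ((((α + 2*Real.pi*m:ℝ)):ℂ)^2 - lam) := by
    intro m
    have hFc : (⇑F) = AddCircle.liftIco 1 0 f := rfl
    rw [hFc, aux_coeff f m]
    exact aux_key_integral α lam h c s P Q u hu_def Cc Ss g gd f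
      (by rw [hCc_def, hωdef]) hCd hSd hSscont hCc0 hSs0 hCc1 hSs1
      hg_def hgd_def hf_def hE1 hE2 m
  have hsum := aux_summable α lam
  have hsum2 : Summable (fun m : ℤ => fourierCoeff (⇑F) m) := by
    apply Summable.of_norm
    apply Summable.congr hsum
    intro m
    rw [hFcoeff m]
  have hpt := has_pointwise_sum_fourier_series_of_summable hsum2 (0 : AddCircle (1:ℝ))
  have hF0 : F ((0:ℝ) : AddCircle (1:ℝ)) = P := by
    have h0mem : (0:ℝ) ∈ Set.Ico (0:ℝ) 1 := ⟨le_refl _, one_pos⟩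
    show AddCircle.liftIco 1 0 f ((0:ℝ) : AddCircle (1:ℝ)) = P
    rw [AddCircle.liftIco_zero_coe_apply h0mem, hf0]
  have hcast : ((0:ℝ) : AddCircle (1:ℝ)) = (0 : AddCircle (1:ℝ)) := by norm_num
  rw [hcast] at hF0
  simp only [fourier_eval_zero, smul_eq_mul, mul_one, hFcoeff, hF0] at hpt
  refine ⟨hcf ▸ hcne, hsum, ?_⟩
  rw [hpt.tsum_eq, hcf, hP_def, mul_one_div, div_div]
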